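/- Fix σ > 0 and let q(ν) := φ(z + ν u) where φ(u') := (1/2)‖D*(u') − z‖² − (σ⁴/2)‖∇h_σ(u')‖² + σ² h_σ(u'), with D*(u') = u' − σ²∇h_σ(u') and h_σ twice differentiable satisfying I − σ² H h_σ(u') ≻ 0 for all u'. Then q'(ν) = ν uᵀ[J D*(z + νu)]u, hence q'(ν) < 0 for ν < 0 and q'(ν) > 0 for ν > 0 whenever u ≠ 0; consequently ν = 0 is the unique global minimizer of q and z is the unique stationary point and strict global minimizer of φ. -/

import Mathlib

open scoped RealInnerProductSpace
open InnerProductSpace ContinuousLinearMap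

section aux
variable {d : ℕ}

local notation "E" => EuclideanSpace ℝ (Fin d)

lemma grib_gradient (σ : ℝ) (hσfun : E → ℝ) (Gh : E → E)
    (hgrad : ∀ w, HasGradientAt hσfun (Gh w) w)
    (hGhdiff : Differentiable ℝ Gh)
    (z : E) (φ : E → ℝ)
    (hφ' : ∀ w, φ w = (1/2) * ⟪w - z, w - z⟫ - σ^2 * ⟪w - z, Gh w⟫ + σ^2 * hσfun w)
    (w : E) :
    HasGradientAt φ ((w - z) - σ^2 • (ContinuousLinearMap.adjoint (fderiv ℝ Gh w)) (w - z)) w := by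
  rw [hasGradientAt_iff_hasFDerivAt]
  have hsub : HasFDerivAt (fun x : E => x - z) (ContinuousLinearMap.id ℝ E) w :=
    (hasFDerivAt_id w).sub_const z
  have h1 := (hsub.inner ℝ hsub).const_mul (1/2 : ℝ)
  have h2 := (hsub.inner ℝ (hGhdiff w).hasFDerivAt).const_mul (σ^2)
  have h3 := ((hgrad w).hasFDerivAt).const_mul (σ^2)
  have total := (h1.sub h2).add h3
  have hfun : φ = fun x : E => (1/2) * ⟪x - z, x - z⟫ - σ^2 * ⟪x - z, Gh x⟫ + σ^2 * hσfun x :=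
    funext hφ'
  rw [hfun]
  refine total.congr_fderiv ?_
  apply ContinuousLinearMap.ext
  intro v
  simp only [ContinuousLinearMap.coe_comp', Function.comp_apply, ContinuousLinearMap.smul_apply,
    ContinuousLinearMap.coe_sub', ContinuousLinearMap.add_apply, Pi.sub_apply,
    fderivInnerCLM_apply, ContinuousLinearMap.prod_apply, ContinuousLinearMap.coe_id', id_eq,
    InnerProductSpace.toDual_apply_apply, smul_eq_mul]
  simp only [inner_sub_left, inner_sub_right, real_inner_smul_left,
    ContinuousLinearMap.adjoint_inner_left]
  rw [real_inner_comm v w, real_inner_comm v z, real_inner_comm (Gh w) v]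
  ring

lemma grib_line (σ : ℝ) (hσfun : E → ℝ) (Gh : E → E)
    (hgrad : ∀ w, HasGradientAt hσfun (Gh w) w)
    (hGhdiff : Differentiable ℝ Gh)
    (z : E) (φ : E → ℝ)
    (hφ' : ∀ w, φ w = (1/2) * ⟪w - z, w - z⟫ - σ^2 * ⟪w - z, Gh w⟫ + σ^2 * hσfun w)
    (u : E) (ν : ℝ) :
    HasDerivAt (fun t : ℝ => φ (z + t • u))
      (ν * (⟪u, u⟫ - σ^2 * ⟪u, (fderiv ℝ Gh (z + ν • u)) u⟫)) ν := by
  have hc : HasDerivAt (fun t : ℝ => z + t • u) u ν := by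
    simpa using ((hasDerivAt_id ν).smul_const u).const_add z
  have hg := (grib_gradient σ hσfun Gh hgrad hGhdiff z φ hφ' (z + ν • u)).hasFDerivAt
  have h := hg.comp_hasDerivAt ν hc
  refine HasDerivAt.congr_deriv h ?_
  have hw : z + ν • u - z = ν • u := by abel
  rw [InnerProductSpace.toDual_apply_apply, hw, inner_sub_left, real_inner_smul_left,
    real_inner_smul_left, ContinuousLinearMap.adjoint_inner_left, real_inner_smul_left]
  ring

end aux

/-- Gribonval's argument that the MMSE denoiser is a proximal map: with
`D*(u') = u' − σ²∇h_σ(u')`, `I − σ²H h_σ(u') ≻ 0` everywhere, and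
`φ(u') = (1/2)‖D*(u') − z‖² − (σ⁴/2)‖∇h_σ(u')‖² + σ² h_σ(u')`, the function
`q(ν) = φ(z + νu)` satisfies `q'(ν) = ν uᵀ[J D*(z + νu)]u`, hence `q'(ν) < 0`
for `ν < 0` and `q'(ν) > 0` for `ν > 0` whenever `u ≠ 0`; consequently `ν = 0`
is the unique global minimizer of `q`, and `z` is the unique stationary point
and strict global minimizer of `φ`. -/
theorem gribonval_unique_stationary_point
    (d : ℕ) (σ : ℝ) (hσ : 0 < σ)
    (hσfun : EuclideanSpace ℝ (Fin d) → ℝ)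
    (Gh : EuclideanSpace ℝ (Fin d) → EuclideanSpace ℝ (Fin d))
    (hgrad : ∀ w, HasGradientAt hσfun (Gh w) w)
    (hGhdiff : Differentiable ℝ Gh)
    (hPD : ∀ w v, v ≠ 0 → 0 < ⟪v, v⟫ - σ ^ 2 * ⟪v, fderiv ℝ Gh w v⟫)
    (Dstar : EuclideanSpace ℝ (Fin d) → EuclideanSpace ℝ (Fin d))
    (hDstar : ∀ w, Dstar w = w - σ ^ 2 • Gh w)
    (z u : EuclideanSpace ℝ (Fin d))
    (φ : EuclideanSpace ℝ (Fin d) → ℝ)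
    (hφ : ∀ w, φ w = (1 / 2) * ‖Dstar w - z‖ ^ 2 -
      (σ ^ 4 / 2) * ‖Gh w‖ ^ 2 + σ ^ 2 * hσfun w)
    (q : ℝ → ℝ) (hq : ∀ ν, q ν = φ (z + ν • u)) :
    (∀ ν : ℝ, deriv q ν = ν * ⟪u, fderiv ℝ Dstar (z + ν • u) u⟫) ∧
    (u ≠ 0 → ∀ ν : ℝ, ν < 0 → deriv q ν < 0) ∧
    (u ≠ 0 → ∀ ν : ℝ, 0 < ν → 0 < deriv q ν) ∧
    (u ≠ 0 → ∀ ν : ℝ, ν ≠ 0 → q 0 < q ν) ∧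
    (∀ w, gradient φ w = 0 ↔ w = z) ∧
    (∀ w, w ≠ z → φ z < φ w) := by
  -- simplified form of φ
  have hφ' : ∀ w, φ w = (1/2) * ⟪w - z, w - z⟫ - σ^2 * ⟪w - z, Gh w⟫ + σ^2 * hσfun w := by
    intro w
    rw [hφ, hDstar]
    have h1 : w - σ ^ 2 • Gh w - z = (w - z) - σ ^ 2 • Gh w := by abel
    rw [h1, norm_sub_sq_real, real_inner_smul_right, norm_smul, Real.norm_eq_abs,
      abs_of_nonneg (sq_nonneg σ), mul_pow, real_inner_self_eq_norm_sq]
    ring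
  -- fderiv of Dstar
  have hDfd : ∀ w, fderiv ℝ Dstar w
      = ContinuousLinearMap.id ℝ (EuclideanSpace ℝ (Fin d)) - σ^2 • fderiv ℝ Gh w := by
    intro w
    have hD : Dstar = fun x => x - σ^2 • Gh x := funext hDstar
    have h : HasFDerivAt Dstar
        (ContinuousLinearMap.id ℝ (EuclideanSpace ℝ (Fin d)) - σ^2 • fderiv ℝ Gh w) w := by
      rw [hD]
      exact (hasFDerivAt_id w).sub (((hGhdiff w).hasFDerivAt).const_smul (σ^2))
    exact h.fderiv
  have hkey : ∀ w, ⟪u, fderiv ℝ Dstar w u⟫ = ⟪u, u⟫ - σ^2 * ⟪u, fderiv ℝ Gh w u⟫ := by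
    intro w
    rw [hDfd, ContinuousLinearMap.sub_apply, inner_sub_right, ContinuousLinearMap.smul_apply,
      real_inner_smul_right, ContinuousLinearMap.id_apply]
  have hqfun : q = fun t : ℝ => φ (z + t • u) := funext hq
  have hq' : ∀ ν : ℝ, HasDerivAt q (ν * ⟪u, fderiv ℝ Dstar (z + ν • u) u⟫) ν := by
    intro ν
    rw [hqfun, hkey]
    exact grib_line σ hσfun Gh hgrad hGhdiff z φ hφ' u ν
  have hderiv : ∀ ν : ℝ, deriv q ν = ν * ⟪u, fderiv ℝ Dstar (z + ν • u) u⟫ :=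
    fun ν => (hq' ν).deriv
  have hpos : u ≠ 0 → ∀ w, 0 < ⟪u, fderiv ℝ Dstar w u⟫ := by
    intro hu w
    rw [hkey]
    exact hPD w u hu
  refine ⟨hderiv, ?_, ?_, ?_, ?_, ?_⟩
  · intro hu ν hν
    rw [hderiv]
    exact mul_neg_of_neg_of_pos hν (hpos hu _)
  · intro hu ν hν
    rw [hderiv]
    exact mul_pos hν (hpos hu _)
  · intro hu ν hν
    have hdiff : Differentiable ℝ q := fun t => (hq' t).differentiableAt
    rcases lt_or_gt_of_ne hν with h | h
    · have mono : StrictAntiOn q (Set.Icc ν 0) := by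
        apply strictAntiOn_of_deriv_neg (convex_Icc ν 0) hdiff.continuous.continuousOn
        intro x hx
        rw [interior_Icc] at hx
        rw [hderiv]
        exact mul_neg_of_neg_of_pos hx.2 (hpos hu _)
      exact mono (Set.mem_Icc.2 ⟨le_refl ν, h.le⟩) (Set.mem_Icc.2 ⟨h.le, le_refl 0⟩) h
    · have mono : StrictMonoOn q (Set.Icc 0 ν) := by
        apply strictMonoOn_of_deriv_pos (convex_Icc 0 ν) hdiff.continuous.continuousOn
        intro x hx
        rw [interior_Icc] at hx
        rw [hderiv]
        exact mul_pos hx.1 (hpos hu _)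
      exact mono (Set.mem_Icc.2 ⟨le_refl 0, h.le⟩) (Set.mem_Icc.2 ⟨h.le, le_refl ν⟩) h
  · intro w
    have hg := grib_gradient σ hσfun Gh hgrad hGhdiff z φ hφ' w
    rw [hg.gradient]
    constructor
    · intro h0
      by_contra hw
      have hv : w - z ≠ 0 := sub_ne_zero.2 hw
      have hip : ⟪w - z, (w - z) - σ^2 • (ContinuousLinearMap.adjoint (fderiv ℝ Gh w)) (w - z)⟫
          = ⟪w - z, w - z⟫ - σ^2 * ⟪w - z, fderiv ℝ Gh w (w - z)⟫ := by
        rw [inner_sub_right, real_inner_smul_right, ContinuousLinearMap.adjoint_inner_right,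
          real_inner_comm (fderiv ℝ Gh w (w - z))]
      have := hPD w (w - z) hv
      rw [← hip, h0, inner_zero_right] at this
      exact lt_irrefl 0 this
    · intro h; subst h; simp
  · intro w hw
    set v := w - z with hv
    have hvne : v ≠ 0 := sub_ne_zero.2 hw
    have hline : ∀ t : ℝ, HasDerivAt (fun s : ℝ => φ (z + s • v))
        (t * (⟪v, v⟫ - σ^2 * ⟪v, (fderiv ℝ Gh (z + t • v)) v⟫)) t :=
      fun t => grib_line σ hσfun Gh hgrad hGhdiff z φ hφ' v t
    have hdiff : Differentiable ℝ (fun s : ℝ => φ (z + s • v)) :=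
      fun t => (hline t).differentiableAt
    have mono : StrictMonoOn (fun s : ℝ => φ (z + s • v)) (Set.Icc 0 1) := by
      apply strictMonoOn_of_deriv_pos (convex_Icc 0 1) hdiff.continuous.continuousOn
      intro x hx
      rw [interior_Icc] at hx
      rw [(hline x).deriv]
      exact mul_pos hx.1 (hPD _ v hvne)
    have h01 := mono (Set.mem_Icc.2 ⟨le_refl 0, zero_le_one⟩)
      (Set.mem_Icc.2 ⟨zero_le_one, le_refl 1⟩) zero_lt_one
    simpa [hv] using h01
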